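/- arXiv:1704.04615 — 8 statements merged into one kernel-verified Lean document; each statement's English description precedes it below -/
import Mathlib

section
/- Let T end with a unique smallest sentinel $. Then comparing two rotations of T lexicographically is equivalent to comparing the corresponding suffixes of T lexicographically: the rotation starting at position i is lexicographically less than the rotation starting at position j if and only if the suffix T[i..n-1] is lexicographically less than the suffix T[j..n-1]. -/
private lemma lex_append_of_not_prefix {α : Type*} {r : α → α → Prop} :
    ∀ {l₁ l₂ : List α} (s₁ s₂ : List α), ¬ l₁ <+: l₂ → List.Lex r l₁ l₂ →
      List.Lex r (l₁ ++ s₁) (l₂ ++ s₂) := by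
  intro l₁ l₂ s₁ s₂ hp h
  induction h with
  | nil => exact absurd (List.nil_prefix) hp
  | @rel a l₁ b l₂ hab => exact List.Lex.rel hab
  | @cons a l₁ l₂ h ih =>
      exact List.Lex.cons (ih (fun ⟨t,ht⟩ => hp ⟨t, by simp [ht]⟩))

/-- Comparing rotations of a sentinel-terminated string lexicographically is
equivalent to comparing the corresponding suffixes. -/
theorem rotation_lt_iff_suffix_lt {α : Type*} [LinearOrder α]
    (T : List α) (dollar : α)
    (hlen : 0 < T.length)
    (hlast : T.getLast? = some dollar)
    (huniq : ∀ k, k < T.length - 1 → T[k]? ≠ some dollar)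
    (hmin : ∀ c ∈ T, c ≠ dollar → dollar < c) :
    ∀ i j, i < T.length → j < T.length →
      (List.Lex (· < ·) (T.drop i ++ T.take i) (T.drop j ++ T.take j) ↔
       List.Lex (· < ·) (T.drop i) (T.drop j)) := by
  set n := T.length with hn
  -- no suffix is a prefix of another suffix
  have nopre : ∀ i j, i < n → j < n → i ≠ j → ¬ (T.drop i <+: T.drop j) := by
    intro i j hi hj hij hpre
    rcases lt_or_gt_of_ne hij with h | h
    · have := hpre.length_le
      simp only [List.length_drop] at this
      omega
    · -- j < i : dollar occurs at position n-i-1 of drop i, hence in drop j at same pos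
      have hdollar : T[n - 1]? = some dollar := by
        simpa [List.getLast?_eq_getElem?, hn] using hlast
      have h1 : (T.drop i)[n - i - 1]? = some dollar := by
        rw [List.getElem?_drop]
        have : i + (n - i - 1) = n - 1 := by omega
        rw [this]; exact hdollar
      have h2 : (T.drop j)[n - i - 1]? = some dollar := by
        obtain ⟨t, ht⟩ := hpre
        have hlt : n - i - 1 < (T.drop i).length := by
          simp only [List.length_drop]; omega
        rw [← ht, List.getElem?_append_left hlt, h1]
      rw [List.getElem?_drop] at h2
      exact huniq (j + (n - i - 1)) (by omega) h2
  have key : ∀ i j, i < n → j < n → i ≠ j →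
      List.Lex (· < ·) (T.drop i) (T.drop j) →
      List.Lex (· < ·) (T.drop i ++ T.take i) (T.drop j ++ T.take j) := by
    intro i j hi hj hij h
    exact lex_append_of_not_prefix _ _ (nopre i j hi hj hij) h
  haveI : IsTrichotomous (List α) (List.Lex (· < ·)) :=
    List.Lex.trichotomous _
  haveI : IsAsymm (List α) (List.Lex (· < ·)) := List.Lex.asymm _
  intro i j hi hj
  rcases eq_or_ne i j with rfl | hij
  · constructor <;> intro h <;> exact absurd h (by
      have : IsIrrefl (List α) (List.Lex (· < ·)) := ⟨fun l => irrefl_of _ l⟩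
      exact irrefl_of _ _)
  · constructor
    · intro h
      rcases trichotomous_of (List.Lex (· < ·)) (T.drop i) (T.drop j) with h' | h' | h'
      · exact h'
      · exfalso
        have : (T.drop i).length = (T.drop j).length := by rw [h']
        simp only [List.length_drop] at this
        omega
      · exact absurd h (asymm_of (List.Lex (· < ·)) (key j i hj hi hij.symm h'))
    · exact key i j hi hj hij
end

section
/- Stability of BWT with respect to F (last-to-first property): for any character s, the i-th occurrence of s in the last column BWT(T) and the i-th occurrence of s in the first column F correspond to the same character occurrence in T. Formally, if positions p < q in BWT(T) both contain character s, then the rotations obtained by moving the last character to the front (i.e., the rows of M(T) starting with s at rows LF(p) and LF(q)) satisfy LF(p) < LF(q). -/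
/-- Stability (last-to-first property): equal characters keep their relative
order from the last column to the first column, i.e. if p < q and
BWT(T)[p] = BWT(T)[q] = s then LF(p) < LF(q). -/
theorem lf_stability {α : Type*} [LinearOrder α]
    (T : List α) (dollar : α)
    (hlen : 0 < T.length)
    (hlast : T.getLast? = some dollar)
    (huniq : ∀ k, k < T.length - 1 → T[k]? ≠ some dollar)
    (hmin : ∀ c ∈ T, c ≠ dollar → dollar < c)
    (SA : Fin T.length → Fin T.length)
    (hSAbij : Function.Bijective SA)
    (hSAsort : ∀ i j : Fin T.length, i < j →
      List.Lex (· < ·) (T.drop (SA i)) (T.drop (SA j)))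
    -- BWT(T)[l] = T[(SA[l] - 1) mod n]
    (bwt : Fin T.length → α)
    (hbwt : ∀ l : Fin T.length,
      some (bwt l) = T[((SA l : ℕ) + T.length - 1) % T.length]?)
    -- LF maps row l to the row of the right cyclic shift of row l:
    -- SA[LF(l)] = (SA[l] - 1) mod n
    (LF : Fin T.length → Fin T.length)
    (hLF : ∀ l : Fin T.length,
      (SA (LF l) : ℕ) = ((SA l : ℕ) + T.length - 1) % T.length)
    (s : α) :
    ∀ p q : Fin T.length, p < q → bwt p = s → bwt q = s → LF p < LF q := by
  intro p q hpq hp hq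
  have hmod : ∀ k : ℕ, k < T.length → (k + T.length - 1) % T.length = if k = 0 then T.length - 1 else k - 1 := by
    intro k hk
    rcases Nat.eq_zero_or_pos k with h | h
    · rw [if_pos h, h, Nat.zero_add, Nat.mod_eq_of_lt (by omega)]
    · have hk1 : k + T.length - 1 = (k - 1) + T.length := by omega
      rw [if_neg (by omega), hk1, Nat.add_mod_right, Nat.mod_eq_of_lt (by omega)]
  have hdollar : T[T.length - 1]? = some dollar := by
    rw [← List.getLast?_eq_getElem?]; exact hlast
  -- s ≠ dollar
  have hsd : s ≠ dollar := by
    intro hs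
    -- both p and q would have SA = 0
    have key : ∀ l : Fin T.length, bwt l = s → (SA l : ℕ) = 0 := by
      intro l hl
      by_contra h0
      have hmem := hbwt l
      rw [hmod _ (SA l).2, if_neg h0] at hmem
      refine huniq ((SA l : ℕ) - 1) (by have := (SA l).2; omega) ?_
      rw [← hmem, hl, hs]
    have h1 := key p hp
    have h2 := key q hq
    have : SA p = SA q := Fin.ext (by omega)
    have : p = q := hSAbij.1 this
    omega
  -- SA l ≠ 0 for l ∈ {p, q}
  have hne0 : ∀ l : Fin T.length, bwt l = s → (SA l : ℕ) ≠ 0 := by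
    intro l hl h0
    have hmem := hbwt l
    rw [hmod _ (SA l).2, if_pos h0, hdollar] at hmem
    exact hsd (by rw [← hl]; exact Option.some.inj hmem)
  -- the suffix at LF l is s :: suffix at SA l
  have hsuf : ∀ l : Fin T.length, bwt l = s → T.drop (SA (LF l)) = s :: T.drop (SA l) := by
    intro l hl
    have h0 := hne0 l hl
    have hLFl : (SA (LF l) : ℕ) = (SA l : ℕ) - 1 := by
      rw [hLF l, hmod _ (SA l).2, if_neg h0]
    have hlt : (SA l : ℕ) - 1 < T.length := by have := (SA l).2; omega
    have hget : T[(SA l : ℕ) - 1]'hlt = s := by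
      have hmem := hbwt l
      rw [hmod _ (SA l).2, if_neg h0,
        List.getElem?_eq_getElem hlt] at hmem
      rw [← hl]; exact (Option.some.inj hmem).symm
    have h1 : (SA l : ℕ) - 1 + 1 = (SA l : ℕ) := by omega
    rw [hLFl, List.drop_eq_getElem_cons hlt, hget, h1]
  have hlex : List.Lex (· < ·) (T.drop (SA (LF p))) (T.drop (SA (LF q))) := by
    rw [hsuf p hp, hsuf q hq]
    exact List.Lex.cons (hSAsort p q hpq)
  rcases lt_trichotomy (LF p) (LF q) with h | h | h
  · exact h
  · rw [h] at hlex
    exact absurd hlex (irrefl_of _ _)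
  · exact absurd hlex (asymm_of _ (hSAsort _ _ h))
end

section
/- Correctness of the LF-mapping formula: for any row index l, LF(l) = C[BWT(T)[l]] + rank_{BWT(T)[l]}(BWT(T), l), where C[c] is the number of characters in T strictly smaller than c and rank_c(S, l) is the number of occurrences of c in S[0..l-1]. Moreover, if SA[l] ≠ 0 then SA[LF(l)] = SA[l] − 1. -/
/-- Correctness of the LF-mapping formula:
LF(l) = C[BWT(T)[l]] + rank_{BWT(T)[l]}(BWT(T), l); moreover if SA[l] ≠ 0
then SA[LF(l)] = SA[l] - 1. -/
theorem lf_formula_correct {α : Type*} [LinearOrder α]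
    (T : List α) (dollar : α)
    (hlen : 0 < T.length)
    (hlast : T.getLast? = some dollar)
    (huniq : ∀ k, k < T.length - 1 → T[k]? ≠ some dollar)
    (hmin : ∀ c ∈ T, c ≠ dollar → dollar < c)
    (SA : Fin T.length → Fin T.length)
    (hSAbij : Function.Bijective SA)
    (hSAsort : ∀ i j : Fin T.length, i < j →
      List.Lex (· < ·) (T.drop (SA i)) (T.drop (SA j)))
    (bwt : Fin T.length → α)
    (hbwt : ∀ l : Fin T.length,
      some (bwt l) = T[((SA l : ℕ) + T.length - 1) % T.length]?)
    (LF : Fin T.length → Fin T.length)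
    (hLF : ∀ l : Fin T.length,
      (SA (LF l) : ℕ) = ((SA l : ℕ) + T.length - 1) % T.length) :
    ∀ l : Fin T.length,
      -- C[bwt l] = number of characters of T strictly smaller than bwt l;
      -- rank_{bwt l}(BWT(T), l) = count of bwt l in the first l entries of BWT(T)
      ((LF l : ℕ) = T.countP (fun c => decide (c < bwt l)) +
        ((((List.finRange T.length).map bwt).take (l : ℕ)).count (bwt l))) ∧
      ((SA l : ℕ) ≠ 0 → (SA (LF l) : ℕ) = (SA l : ℕ) - 1) := by
  haveI : NeZero T.length := ⟨by omega⟩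
  have hmod : ∀ a : Fin T.length, (SA a : ℕ) ≠ 0 →
      ((SA a : ℕ) + T.length - 1) % T.length = (SA a : ℕ) - 1 := by
    intro a h0
    have hlt := (SA a).isLt
    rw [show (SA a : ℕ) + T.length - 1 = ((SA a : ℕ) - 1) + T.length by omega,
      Nat.add_mod_right]
    exact Nat.mod_eq_of_lt (by omega)
  have part2 : ∀ a : Fin T.length, (SA a : ℕ) ≠ 0 → (SA (LF a) : ℕ) = (SA a : ℕ) - 1 := by
    intro a h0
    rw [hLF a, hmod a h0]
  -- the shift map g
  set d : Fin T.length := ⟨T.length - 1, by omega⟩ with hdd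
  set g : Fin T.length → Fin T.length := fun a => SA a + d with hgdef
  have hg : ∀ a : Fin T.length, (g a : ℕ) = ((SA a : ℕ) + T.length - 1) % T.length := by
    intro a
    show ((SA a + d : Fin T.length) : ℕ) = _
    rw [Fin.add_def]
    show ((SA a : ℕ) + (T.length - 1)) % T.length = _
    congr 1
    omega
  have hgbij : Function.Bijective g := (Equiv.addRight d).bijective.comp hSAbij
  have hSALF : ∀ a : Fin T.length, SA (LF a) = g a := fun a => Fin.ext (by rw [hLF a, hg a])
  have hLFinj : Function.Injective LF := by
    intro a b h
    apply hgbij.injective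
    rw [← hSALF a, ← hSALF b, h]
  have hLFbij : Function.Bijective LF := Finite.injective_iff_bijective.mp hLFinj
  have hbwt' : ∀ a : Fin T.length, bwt a = T[(g a : ℕ)]'((g a).isLt) := by
    intro a
    have h := hbwt a
    rw [← hg a, List.getElem?_eq_getElem (g a).isLt] at h
    exact Option.some.inj h
  have hdn : T[T.length - 1]'(by omega) = dollar := by
    have h := hlast
    rw [List.getLast?_eq_getElem?,
      List.getElem?_eq_getElem (by omega : T.length - 1 < T.length)] at h
    exact Option.some.inj h
  have hdollar_iff : ∀ a : Fin T.length, bwt a = dollar ↔ (SA a : ℕ) = 0 := by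
    intro a
    constructor
    · intro hb
      by_contra h0
      have h1 : (g a : ℕ) = (SA a : ℕ) - 1 := by rw [hg a, hmod a h0]
      have hlt := (SA a).isLt
      have h2 : (g a : ℕ) < T.length - 1 := by omega
      exact huniq (g a) h2 (by
        rw [List.getElem?_eq_getElem (g a).isLt, ← hbwt' a, hb])
    · intro h0
      have h1 : (g a : ℕ) = T.length - 1 := by
        rw [hg a, h0, Nat.zero_add]
        exact Nat.mod_eq_of_lt (by omega)
      rw [hbwt' a]
      simp only [h1]
      exact hdn
  have hdropg : ∀ a : Fin T.length, T.drop ((g a : ℕ)) = bwt a :: T.drop ((g a : ℕ) + 1) := by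
    intro a
    rw [List.drop_eq_getElem_cons (g a).isLt, ← hbwt' a]
  have hstep : ∀ a : Fin T.length, (SA a : ℕ) ≠ 0 →
      T.drop ((g a : ℕ)) = bwt a :: T.drop ((SA a : ℕ)) := by
    intro a h0
    have h1 : (g a : ℕ) = (SA a : ℕ) - 1 := by rw [hg a, hmod a h0]
    have hlt := (SA a).isLt
    rw [hdropg a, h1, show (SA a : ℕ) - 1 + 1 = (SA a : ℕ) by omega]
  have hmono : ∀ a b : Fin T.length,
      List.Lex (· < ·) (T.drop ((SA a : ℕ))) (T.drop ((SA b : ℕ))) → a < b := by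
    intro a b h
    rcases lt_trichotomy a b with h1 | h1 | h1
    · exact h1
    · exfalso; rw [h1] at h; exact lt_irrefl _ (show T.drop ((SA b : ℕ)) < _ from h)
    · exfalso
      exact lt_asymm (show T.drop ((SA b : ℕ)) < T.drop ((SA a : ℕ)) from hSAsort b a h1) h
  have hR : ∀ a b : Fin T.length, (bwt a < bwt b ∨ (bwt a = bwt b ∧ a < b)) → LF a < LF b := by
    intro a b hab
    apply hmono (LF a) (LF b)
    rw [hSALF a, hSALF b]
    rcases hab with hlt | ⟨heq, hab⟩
    · rw [hdropg a, hdropg b]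
      exact List.Lex.rel hlt
    · have h0a : (SA a : ℕ) ≠ 0 := by
        intro h0
        have hda : bwt a = dollar := (hdollar_iff a).mpr h0
        have hdb : bwt b = dollar := by rw [← heq]; exact hda
        have h0b := (hdollar_iff b).mp hdb
        exact absurd (hSAbij.injective (Fin.ext (h0.trans h0b.symm))) (ne_of_lt hab)
      have h0b : (SA b : ℕ) ≠ 0 := by
        intro h0
        have hdb : bwt b = dollar := (hdollar_iff b).mpr h0
        have hda : bwt a = dollar := by rw [heq]; exact hdb
        exact h0a ((hdollar_iff a).mp hda)
      rw [hstep a h0a, hstep b h0b, heq]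
      exact List.Lex.cons (hSAsort a b hab)
  have hRiff : ∀ a b : Fin T.length,
      LF b < LF a ↔ (bwt b < bwt a ∨ (bwt b = bwt a ∧ b < a)) := by
    intro a b
    constructor
    · intro h
      rcases lt_trichotomy (bwt b) (bwt a) with h1 | h1 | h1
      · exact Or.inl h1
      · rcases lt_trichotomy b a with h2 | h2 | h2
        · exact Or.inr ⟨h1, h2⟩
        · exfalso; rw [h2] at h; exact lt_irrefl _ h
        · exact absurd h (not_lt_of_gt (hR a b (Or.inr ⟨h1.symm, h2⟩)))
      · exact absurd h (not_lt_of_gt (hR a b (Or.inl h1)))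
    · exact hR b a
  -- counting bridge
  have bridge : ∀ q : Fin T.length → Bool,
      (List.finRange T.length).countP q = (Finset.univ.filter (fun a => q a)).card := by
    intro q
    rw [Fin.univ_def]
    simp [Finset.filter, Finset.card, List.countP_eq_length_filter]
  have takeCount : ∀ (m : ℕ) (q : Fin T.length → Bool),
      ((List.finRange T.length).take m).countP q
        = (List.finRange T.length).countP (fun a => q a && decide ((a : ℕ) < m)) := by
    intro m q
    have hsplit : (List.finRange T.length)
        = (List.finRange T.length).take m ++ (List.finRange T.length).drop m :=
      (List.take_append_drop m _).symm
    have h1 : ∀ a ∈ (List.finRange T.length).take m, (a : ℕ) < m := by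
      intro a ha
      obtain ⟨i, hi, rfl⟩ := List.mem_iff_getElem.mp ha
      rw [List.getElem_take] at *
      simp only [List.getElem_finRange]
      simp [List.length_take] at hi
      simpa using hi.1
    have h2 : ∀ a ∈ (List.finRange T.length).drop m, ¬ ((a : ℕ) < m) := by
      intro a ha
      obtain ⟨i, hi, rfl⟩ := List.mem_iff_getElem.mp ha
      rw [List.getElem_drop] at *
      simp only [List.getElem_finRange]
      simp
    conv_rhs => rw [hsplit]
    rw [List.countP_append]
    have e1 : ((List.finRange T.length).take m).countP (fun a => q a && decide ((a : ℕ) < m))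
        = ((List.finRange T.length).take m).countP q := by
      apply List.countP_congr
      intro a ha
      simp [h1 a ha]
    have e2 : ((List.finRange T.length).drop m).countP
        (fun a => q a && decide ((a : ℕ) < m)) = 0 := by
      rw [List.countP_eq_zero]
      intro a ha
      simp [h2 a ha]
    omega
  intro l
  refine ⟨?_, part2 l⟩
  -- step D
  have hD : (LF l : ℕ) = (Finset.univ.filter (fun a => LF a < LF l)).card := by
    have h1 : Finset.image LF (Finset.univ.filter (fun a => LF a < LF l))
        = Finset.Iio (LF l) := by
      ext j
      simp only [Finset.mem_image, Finset.mem_filter, Finset.mem_univ, true_and, Finset.mem_Iio]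
      constructor
      · rintro ⟨a, ha, rfl⟩; exact ha
      · intro hj; obtain ⟨a, rfl⟩ := hLFbij.surjective j; exact ⟨a, hj, rfl⟩
    have h2 := Finset.card_image_of_injective
      (Finset.univ.filter (fun a => LF a < LF l)) hLFinj
    rw [← Fin.card_Iio (LF l), ← h1, h2]
  have hE : (Finset.univ.filter (fun a => LF a < LF l))
      = (Finset.univ.filter (fun a => bwt a < bwt l))
        ∪ (Finset.univ.filter (fun a => bwt a = bwt l ∧ a < l)) := by
    rw [← Finset.filter_or]
    apply Finset.filter_congr
    intro a _
    exact hRiff l a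
  have hdisj : Disjoint (Finset.univ.filter (fun a => bwt a < bwt l))
      (Finset.univ.filter (fun a => bwt a = bwt l ∧ a < l)) := by
    rw [Finset.disjoint_left]
    intro a ha hb
    simp only [Finset.mem_filter, Finset.mem_univ, true_and] at ha hb
    exact absurd hb.1 (ne_of_lt ha)
  -- card1
  have hc1 : (Finset.univ.filter (fun a => bwt a < bwt l)).card
      = T.countP (fun c => decide (c < bwt l)) := by
    have hbij : (Finset.univ.filter (fun a => bwt a < bwt l)).card
        = (Finset.univ.filter (fun i : Fin T.length => T[(i : ℕ)]'i.isLt < bwt l)).card := by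
      apply Finset.card_bij (fun a _ => g a)
      · intro a ha
        simp only [Finset.mem_filter, Finset.mem_univ, true_and] at ha ⊢
        rw [← hbwt' a]
        exact ha
      · intro a₁ _ a₂ _ h
        exact hgbij.injective h
      · intro i hi
        obtain ⟨a, rfl⟩ := hgbij.surjective i
        simp only [Finset.mem_filter, Finset.mem_univ, true_and] at hi ⊢
        exact ⟨a, by rw [hbwt' a]; exact hi, rfl⟩
    rw [hbij]
    conv_rhs => rw [← List.ofFn_getElem (xs := T)]
    rw [List.ofFn_eq_map, List.countP_map, bridge]
    congr 1
    apply Finset.filter_congr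
    intro a _
    simp
  -- card2
  have hc2 : (((List.finRange T.length).map bwt).take (l : ℕ)).count (bwt l)
      = (Finset.univ.filter (fun a => bwt a = bwt l ∧ a < l)).card := by
    rw [← List.map_take, List.count_eq_countP, List.countP_map, takeCount, bridge]
    congr 1
    apply Finset.filter_congr
    intro a _
    simp only [Function.comp_apply, Bool.and_eq_true, beq_iff_eq, decide_eq_true_eq, Fin.lt_def]
  rw [hD, hE, Finset.card_union_of_disjoint hdisj, hc1, hc2]
end

section
/- LF is a bijection (permutation) on {0, 1, ..., n−1}. -/
/-- LF is a bijection on row indices. -/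
theorem lf_bijective {α : Type*} [LinearOrder α]
    (T : List α) (dollar : α)
    (hlen : 0 < T.length)
    (hlast : T.getLast? = some dollar)
    (huniq : ∀ k, k < T.length - 1 → T[k]? ≠ some dollar)
    (hmin : ∀ c ∈ T, c ≠ dollar → dollar < c)
    (SA : Fin T.length → Fin T.length)
    (hSAbij : Function.Bijective SA)
    (hSAsort : ∀ i j : Fin T.length, i < j →
      List.Lex (· < ·) (T.drop (SA i)) (T.drop (SA j)))
    (LF : Fin T.length → Fin T.length)
    (hLF : ∀ l : Fin T.length,
      (SA (LF l) : ℕ) = ((SA l : ℕ) + T.length - 1) % T.length) :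
    Function.Bijective LF := by
  rw [Fintype.bijective_iff_injective_and_card]
  refine ⟨fun a b hab => ?_, rfl⟩
  have h : (SA (LF a) : ℕ) = (SA (LF b) : ℕ) := by rw [hab]
  rw [hLF a, hLF b] at h
  have ha := (SA a).isLt
  have hb := (SA b).isLt
  have hmod : ((SA a : ℕ) + T.length - 1) % T.length = ((SA b : ℕ) + T.length - 1) % T.length := h
  have key : (SA a : ℕ) = (SA b : ℕ) := by
    have h1 : ((SA a : ℕ) + T.length - 1) % T.length = if (SA a : ℕ) = 0 then T.length - 1 else (SA a : ℕ) - 1 := by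
      split
      · next h0 => rw [h0]; simp [Nat.mod_eq_of_lt, Nat.sub_lt hlen]
      · next h0 =>
        have : (SA a : ℕ) + T.length - 1 = ((SA a : ℕ) - 1) + T.length := by omega
        rw [this, Nat.add_mod_right, Nat.mod_eq_of_lt (by omega)]
    have h2 : ((SA b : ℕ) + T.length - 1) % T.length = if (SA b : ℕ) = 0 then T.length - 1 else (SA b : ℕ) - 1 := by
      split
      · next h0 => rw [h0]; simp [Nat.mod_eq_of_lt, Nat.sub_lt hlen]
      · next h0 =>
        have : (SA b : ℕ) + T.length - 1 = ((SA b : ℕ) - 1) + T.length := by omega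
        rw [this, Nat.add_mod_right, Nat.mod_eq_of_lt (by omega)]
    rw [h1, h2] at hmod
    split at hmod <;> split at hmod <;> omega
  exact hSAbij.1 (Fin.ext key)
end

section
/- Theorem 1 (FMtree partition theorem): Let L(P, T) denote the set of occurrence positions of pattern P in text T, and for a pattern Q let FM(Q, T) denote the set of occurrence positions y of Q in T with y mod D = 0 (the sampled occurrences). Then L(P, T) = ⋃_{i=0}^{D−1} { y + i : y ∈ ⋃_{W ∈ Σ^i} FM(W·P, T) }, where Σ^i ranges over all strings of length i over the alphabet and W·P denotes concatenation. -/
/-- y is an occurrence position of Q in T: T[y..y+|Q|-1] = Q. -/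
def Occ {α : Type*} (T Q : List α) (y : ℕ) : Prop :=
  y + Q.length ≤ T.length ∧ Q <+: T.drop y

/-- Theorem 1 (FMtree partition theorem): the occurrence positions of P in T
are exactly the positions y + i where 0 ≤ i ≤ D-1, W ranges over all strings
of length i over the alphabet, and y is an occurrence of W·P divisible by D. -/
theorem fmtree_partition {α : Type*} (T P : List α) (D : ℕ) (hD : 1 ≤ D) :
    ∀ x : ℕ, Occ T P x ↔
      ∃ i < D, ∃ W : List α, W.length = i ∧
        ∃ y : ℕ, y % D = 0 ∧ Occ T (W ++ P) y ∧ x = y + i := by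
  intro x
  constructor
  · rintro ⟨hlen, s, hs⟩
    set i := x % D with hi
    set y := x - i with hy
    have hiy : y + i = x := Nat.sub_add_cancel (Nat.mod_le x D)
    have hdm := Nat.div_add_mod x D
    have hile : i ≤ (T.drop y).length := by simp [List.length_drop]; omega
    have hWlen : ((T.drop y).take i).length = i := by
      simp [List.length_take, List.length_drop]; omega
    have h1 : T.drop y = (T.drop y).take i ++ T.drop x := by
      conv_lhs => rw [← List.take_append_drop i (T.drop y)]
      rw [List.drop_drop, show y + i = x from hiy]
    refine ⟨i, Nat.mod_lt x hD, (T.drop y).take i, hWlen, y, ?_, ⟨?_, ?_⟩, by omega⟩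
    · have : y = D * (x / D) := by omega
      rw [this]; simp [Nat.mul_mod_right]
    · simp only [List.length_append, hWlen]
      omega
    · refine ⟨s, ?_⟩
      rw [List.append_assoc, hs]
      exact h1.symm
  · rintro ⟨i, hiD, W, hW, y, hyD, ⟨hlen, s, hs⟩, hx⟩
    constructor
    · simp at hlen; omega
    · refine ⟨s, ?_⟩
      have h1 : T.drop x = (T.drop y).drop i := by
        rw [List.drop_drop, ← hx]
      rw [h1, ← hs, List.append_assoc]
      rw [← hW]
      exact List.drop_left.symm
end

section
/- Theorem 2 (early leaf calculation): With notation as before, L(P, T) = ⋃_{i=1}^{D} { y − i : y ∈ FM(P[i..|P|−1], T), y ≥ i, T[y−i..y−1] = P[0..i−1] }, where FM(Q, T) is the set of occurrence positions of Q in T divisible by D. -/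
/-- Theorem 2 (early leaf calculation):
L(P,T) = ⋃_{i=1}^{D} { y - i : y ∈ FM(P[i..|P|-1], T), y ≥ i,
T[y-i..y-1] = P[0..i-1] }. -/
theorem early_leaf_calculation {α : Type*} (T P : List α) (D : ℕ)
    (hD : 1 ≤ D) (hPD : D ≤ P.length) :
    ∀ x : ℕ, Occ T P x ↔
      ∃ i : ℕ, 1 ≤ i ∧ i ≤ D ∧
        ∃ y : ℕ, y % D = 0 ∧ Occ T (P.drop i) y ∧ i ≤ y ∧
          (T.drop (y - i)).take i = P.take i ∧ x = y - i := by
  intro x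
  constructor
  · rintro ⟨hlen, hpre⟩
    have hmodlt : x % D < D := Nat.mod_lt _ hD
    have hmodle : x % D ≤ x := Nat.mod_le _ _
    set i := D - x % D with hi
    have hi1 : 1 ≤ i := by omega
    have hiD : i ≤ D := Nat.sub_le _ _
    have hiP : i ≤ P.length := hiD.trans hPD
    have hdm : D * (x / D) + x % D = x := Nat.div_add_mod x D
    refine ⟨i, hi1, hiD, x + i, ?_, ⟨?_, ?_⟩, le_add_self, ?_, by omega⟩
    · have : x + i = D * (x / D + 1) := by rw [Nat.mul_add]; omega
      rw [this, Nat.mul_mod_right]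
    · rw [List.length_drop]; omega
    · have := hpre.drop i
      rwa [List.drop_drop] at this
    · have hP : P = (T.drop x).take P.length := List.prefix_iff_eq_take.mp hpre
      have hx : x + i - i = x := by omega
      rw [hx]
      conv_rhs => rw [hP]
      rw [List.take_take, Nat.min_eq_left hiP]
  · rintro ⟨i, hi1, hiD, y, hy, ⟨hlen, hpre⟩, hiy, htake, hx⟩
    have hiP : i ≤ P.length := hiD.trans hPD
    subst hx
    constructor
    · rw [List.length_drop] at hlen; omega
    · have hsplit : T.drop (y - i) =
          (T.drop (y - i)).take i ++ (T.drop (y - i)).drop i :=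
        (List.take_append_drop i _).symm
      rw [hsplit, htake, List.drop_drop]
      have : y - i + i = y := by omega
      rw [this]
      conv_lhs => rw [← List.take_append_drop i P]
      exact (List.prefix_append_right_inj (P.take i)).mpr hpre
end

section
/- For each 1 ≤ i ≤ D, the set Lg_{(D−i) mod D}(P, T) of occurrence positions x of P in T with x mod D = (D−i) mod D equals { y − i : y ∈ FM(P[i..|P|−1], T), y ≥ i, T[y−i..y−1] = P[0..i−1] }. -/
/-- For each 1 ≤ i ≤ D, the occurrence positions x of P with
x mod D = (D - i) mod D are exactly { y - i : y ∈ FM(P[i..|P|-1], T), y ≥ i,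
T[y-i..y-1] = P[0..i-1] }. -/
theorem early_leaf_residue_class {α : Type*} (T P : List α) (D i : ℕ)
    (h1 : 1 ≤ i) (h2 : i ≤ D) (hiP : i ≤ P.length) :
    ∀ x : ℕ, (Occ T P x ∧ x % D = (D - i) % D) ↔
      ∃ y : ℕ, y % D = 0 ∧ Occ T (P.drop i) y ∧ i ≤ y ∧
        (T.drop (y - i)).take i = P.take i ∧ x = y - i := by
  intro x
  have hD : 1 ≤ D := le_trans h1 h2
  constructor
  · rintro ⟨⟨hlen, s, hs⟩, hmod⟩
    refine ⟨x + i, ?_, ⟨?_, ?_⟩, by omega, ?_, by omega⟩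
    · have hxm : x % D = D - i := by
        rw [hmod]; exact Nat.mod_eq_of_lt (by omega)
      have hk := Nat.div_add_mod x D
      have hxi : x + i = D * (x / D + 1) := by
        rw [Nat.mul_add, Nat.mul_one]; omega
      rw [hxi, Nat.mul_mod_right]
    · simp only [List.length_drop]; omega
    · have hdd : T.drop (x + i) = P.drop i ++ s := by
        have h := congrArg (List.drop i) hs
        rw [List.drop_append_of_le_length hiP, List.drop_drop] at h
        exact h.symm
      exact ⟨s, hdd.symm⟩
    · have : x + i - i = x := by omega
      rw [this, ← hs, List.take_append_of_le_length hiP]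
  · rintro ⟨y, hy0, ⟨hlen, s, hs⟩, hiy, htake, rfl⟩
    have hlen' : y + (P.length - i) ≤ T.length := by
      simpa using hlen
    refine ⟨⟨by omega, s, ?_⟩, ?_⟩
    · have hsplit : T.drop (y - i) =
          (T.drop (y - i)).take i ++ (T.drop (y - i)).drop i := by
        rw [List.take_append_drop]
      have hdd : (T.drop (y - i)).drop i = T.drop y := by
        rw [List.drop_drop]
        congr 1; omega
      rw [hsplit, hdd, htake, ← hs, ← List.append_assoc, List.take_append_drop]
    · have hdvd : D ∣ y := Nat.dvd_of_mod_eq_zero hy0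
      obtain ⟨k, rfl⟩ := hdvd
      have hk1 : 1 ≤ k := by
        by_contra h
        have : k = 0 := by omega
        subst this; simp at hiy; omega
      have hm2 : k = (k - 1) + 1 := by omega
      have hm : D * k = D * (k - 1) + D := by
        conv_lhs => rw [hm2]
        rw [Nat.mul_add, Nat.mul_one]
      have : D * k - i = D * (k - 1) + (D - i) := by omega
      rw [this, Nat.mul_add_mod]
end

section
/- Image of an SA interval under LF restricted to one character: given an interval [sp, ep] of suffix-array indices, and a character s, the set { LF(k) : sp ≤ k ≤ ep, BWT(T)[k] = s } is exactly the contiguous interval [C[s] + rank_s(BWT(T), sp), C[s] + rank_s(BWT(T), ep+1) − 1]. -/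
/-- C[s]: number of characters of T strictly smaller than s. -/
def cntLt {α : Type*} [LinearOrder α] (T : List α) (s : α) : ℕ :=
  T.countP (fun c => decide (c < s))

/-- rank_s(L, l): number of occurrences of s in L[0..l-1]. -/
def rnk {α : Type*} [DecidableEq α] (L : List α) (s : α) (l : ℕ) : ℕ :=
  (L.take l).count s

/-- Image of an SA interval under LF restricted to one character s:
{ LF(k) : sp ≤ k ≤ ep, BWT(T)[k] = s } is exactly the contiguous interval
[C[s] + rank_s(BWT, sp), C[s] + rank_s(BWT, ep+1) - 1] (empty when the two
ranks coincide). -/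
theorem lf_interval_image {α : Type*} [LinearOrder α]
    (T : List α) (dollar : α)
    (hlen : 0 < T.length)
    (hlast : T.getLast? = some dollar)
    (huniq : ∀ k, k < T.length - 1 → T[k]? ≠ some dollar)
    (hmin : ∀ c ∈ T, c ≠ dollar → dollar < c)
    (SA : Fin T.length → Fin T.length)
    (hSAbij : Function.Bijective SA)
    (hSAsort : ∀ i j : Fin T.length, i < j →
      List.Lex (· < ·) (T.drop (SA i)) (T.drop (SA j)))
    (bwt : Fin T.length → α)
    (hbwt : ∀ l : Fin T.length,
      some (bwt l) = T[((SA l : ℕ) + T.length - 1) % T.length]?)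
    (B : List α) (hB : B = (List.finRange T.length).map bwt)
    (LF : Fin T.length → ℕ)
    (hLF : ∀ l : Fin T.length, LF l = cntLt T (bwt l) + rnk B (bwt l) (l : ℕ))
    (s : α) (sp ep : ℕ) (hsp : sp ≤ ep) (hep : ep < T.length) :
    ∀ m : ℕ,
      (∃ k : Fin T.length, sp ≤ (k : ℕ) ∧ (k : ℕ) ≤ ep ∧ bwt k = s ∧ LF k = m) ↔
      ((cntLt T s + rnk B s sp : ℤ) ≤ (m : ℤ) ∧
       (m : ℤ) ≤ (cntLt T s : ℤ) + rnk B s (ep + 1) - 1) := by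
  intro m
  have hBlen : B.length = T.length := by simp [hB]
  have hstep : ∀ l : ℕ, rnk B s (l+1) = rnk B s l + ((B[l]?).toList).count s := by
    intro l
    simp [rnk, List.take_succ, List.count_append]
  have hgetB : ∀ (l : ℕ) (hl : l < T.length), B[l]? = some (bwt ⟨l, hl⟩) := by
    intro l hl
    subst hB
    simp [List.getElem?_eq_getElem, hl]
  have hmono : Monotone (rnk B s) :=
    monotone_nat_of_le_succ (fun l => by rw [hstep l]; exact Nat.le_add_right _ _)
  constructor
  · rintro ⟨k, hk1, hk2, hks, hkm⟩
    have hsk : rnk B s ((k : ℕ)+1) = rnk B s (k : ℕ) + 1 := by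
      rw [hstep (k : ℕ), hgetB (k : ℕ) k.isLt]
      simp only [Option.toList_some]
      rw [Fin.eta]
      simp [hks]
    have hm : m = cntLt T s + rnk B s (k : ℕ) := by rw [← hkm, hLF k, hks]
    have h1 := hmono hk1
    have h2 := hmono (show (k : ℕ) + 1 ≤ ep + 1 by omega)
    constructor
    · omega
    · omega
  · rintro ⟨h1, h2⟩
    have h1' : cntLt T s + rnk B s sp ≤ m := by exact_mod_cast h1
    have h2' : m + 1 ≤ cntLt T s + rnk B s (ep + 1) := by omega
    set j := m - cntLt T s with hj
    have hmC : cntLt T s ≤ m := le_trans (Nat.le_add_right _ _) h1'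
    have hjsp : rnk B s sp ≤ j := by omega
    have hjep : j + 1 ≤ rnk B s (ep + 1) := by omega
    have hex : ∃ l, j < rnk B s l := ⟨ep + 1, by omega⟩
    set l0 := Nat.find hex with hl0def
    have hl0 : j < rnk B s l0 := Nat.find_spec hex
    have hl0pos : 0 < l0 := by
      rcases Nat.eq_zero_or_pos l0 with h | h
      · exfalso; rw [h] at hl0; simp [rnk] at hl0
      · exact h
    set k := l0 - 1 with hkdef
    have hkl0 : k + 1 = l0 := by omega
    have hklt : ¬ j < rnk B s k := Nat.find_min hex (by omega)
    have hstep1 : rnk B s (k+1) ≤ rnk B s k + 1 := by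
      rw [hstep k]
      have : ((B[k]?).toList).count s ≤ 1 := by
        cases h : B[k]? <;> simp [List.count_cons] <;> split <;> omega
      omega
    have hrk : rnk B s k = j ∧ rnk B s (k+1) = rnk B s k + 1 := by
      rw [hkl0] at *
      omega
    have hkep : k ≤ ep := by
      by_contra h
      have : ep + 1 ≤ k := by omega
      have := hmono this
      omega
    have hksp : sp ≤ k := by
      by_contra h
      have : k + 1 ≤ sp := by omega
      have := hmono this
      omega
    have hkT : k < T.length := by omega
    have hbs : bwt ⟨k, hkT⟩ = s := by
      have := hstep k
      rw [hgetB k hkT] at this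
      simp only [Option.toList_some] at this
      by_contra hne
      rw [List.count_singleton'] at this
      simp [hne] at this
      omega
    refine ⟨⟨k, hkT⟩, hksp, hkep, hbs, ?_⟩
    rw [hLF, hbs]
    simp only
    omega
end
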